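/- The Fourier transform of Ψ₂(t) = C·e^{-a|t|}(cos(at) + sin(a|t|)) (C > 0, a > 0) is Ψ̂₂(ω) = C·√(2/π)·4a³/(4a⁴ + ω⁴), which is strictly positive for all real ω. -/

import Mathlib

open MeasureTheory Real Filter

section AuxLemmas
open Set

namespace FUaux

lemma cexp_integrableOn (c : ℂ) (hc : c.re < 0) :
    IntegrableOn (fun t : ℝ => Complex.exp (c * t)) (Set.Ioi (0:ℝ)) := by
  have h : IntegrableOn (fun t : ℝ => Real.exp (-(-c.re) * t)) (Set.Ioi (0:ℝ)) :=
    exp_neg_integrableOn_Ioi 0 (by linarith)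
  refine h.integrable.mono' ?_ ?_
  · exact (Complex.continuous_exp.comp
      (continuous_const.mul Complex.continuous_ofReal)).aestronglyMeasurable
  · refine Filter.Eventually.of_forall fun t => ?_
    simp [Complex.norm_exp, Complex.mul_re]

lemma integral_cexp_Ioi (c : ℂ) (hc : c.re < 0) :
    ∫ t : ℝ in Set.Ioi (0:ℝ), Complex.exp (c * t) = -c⁻¹ := by
  have hc0 : c ≠ 0 := fun h => by simp [h] at hc
  have hderiv : ∀ x ∈ Set.Ici (0:ℝ),
      HasDerivAt (fun t : ℝ => Complex.exp (c * t) / c) (Complex.exp (c * x)) x := by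
    intro x _
    have h1 : HasDerivAt (fun t : ℝ => (t : ℂ)) 1 x := by
      simpa using (hasDerivAt_id x).ofReal_comp
    have h2 : HasDerivAt (fun t : ℝ => c * (t:ℂ)) c x := by
      simpa using h1.const_mul c
    have h3 := (h2.cexp).div_const c
    convert h3 using 1
    · rfl
    · field_simp
  have htend : Tendsto (fun x : ℝ => Complex.exp (c * x) / c) atTop (nhds 0) := by
    rw [tendsto_zero_iff_norm_tendsto_zero]
    have h4 : Tendsto (fun x : ℝ => c.re * x) atTop atBot :=
      Tendsto.const_mul_atTop_of_neg hc tendsto_id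
    have h5 : Tendsto (fun x : ℝ => Real.exp (c.re * x) / ‖c‖) atTop (nhds 0) := by
      simpa using (Real.tendsto_exp_atBot.comp h4).div_const ‖c‖
    refine h5.congr fun x => ?_
    simp [norm_div, Complex.norm_exp, Complex.mul_re]
  have := integral_Ioi_of_hasDerivAt_of_tendsto' hderiv (cexp_integrableOn c hc) htend
  simpa using this

lemma key_pair (x y : ℝ) (hx : x ≠ 0) :
    (1 - Complex.I) * ((x:ℂ) + Complex.I * y)⁻¹ +
      (1 + Complex.I) * ((x:ℂ) - Complex.I * y)⁻¹ =
      ((2 * (x - y) / (x ^ 2 + y ^ 2) : ℝ) : ℂ) := by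
  have h1 : (x : ℂ) + Complex.I * y ≠ 0 := by
    intro h
    apply hx
    simpa using congrArg Complex.re h
  have h2 : (x : ℂ) - Complex.I * y ≠ 0 := by
    intro h
    apply hx
    simpa using congrArg Complex.re h
  have h3 : ((x:ℝ) ^ 2 + y ^ 2 : ℝ) ≠ 0 := by positivity
  have h4 : ((x:ℂ) ^ 2 + (y:ℂ) ^ 2 : ℂ) ≠ 0 := by
    intro h
    apply h3
    exact_mod_cast h
  push_cast
  field_simp
  linear_combination (2*(x:ℂ)*y*(x+y)) * Complex.I_sq

end FUaux

namespace FUaux2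
open FUaux

lemma ptwise (C a ω t : ℝ) :
    Complex.exp (-(Complex.I * ω * t)) *
      ((C * Real.exp (-a * t) * (Real.cos (a * t) + Real.sin (a * t)) : ℝ) : ℂ) =
    ((C:ℂ)/2) * ((1 - Complex.I) * Complex.exp ((-(a:ℂ) + Complex.I * ((a:ℝ) - ω)) * t)
      + (1 + Complex.I) * Complex.exp ((-(a:ℂ) - Complex.I * ((a:ℝ) + ω)) * t)) := by
  have hp : Complex.exp (-(Complex.I * ω * t)) * (Complex.exp ((-a * t : ℝ) : ℂ) *
      Complex.exp (((a * t : ℝ) : ℂ) * Complex.I)) =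
      Complex.exp ((-(a:ℂ) + Complex.I * ((a:ℝ) - ω)) * t) := by
    rw [← Complex.exp_add, ← Complex.exp_add]
    congr 1
    push_cast
    ring
  have hq : Complex.exp (-(Complex.I * ω * t)) * (Complex.exp ((-a * t : ℝ) : ℂ) *
      Complex.exp (-((a * t : ℝ) : ℂ) * Complex.I)) =
      Complex.exp ((-(a:ℂ) - Complex.I * ((a:ℝ) + ω)) * t) := by
    rw [← Complex.exp_add, ← Complex.exp_add]
    congr 1
    push_cast
    ring
  have hc2 := Complex.two_cos (((a * t : ℝ)) : ℂ)
  have hs2 := Complex.two_sin (((a * t : ℝ)) : ℂ)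
  simp only [Complex.ofReal_mul, Complex.ofReal_add, Complex.ofReal_exp, Complex.ofReal_cos,
    Complex.ofReal_sin]
  push_cast [← Complex.ofReal_exp, ← Complex.ofReal_cos, ← Complex.ofReal_sin] at hp hq hc2 hs2 ⊢
  linear_combination ((C:ℂ) * Complex.exp (-(Complex.I * ω * t)) * Complex.exp (-(a:ℂ) * t) / 2) * hc2
    + ((C:ℂ) * Complex.exp (-(Complex.I * ω * t)) * Complex.exp (-(a:ℂ) * t) / 2) * hs2
    + ((C:ℂ) * (1 - Complex.I) / 2) * hp + ((C:ℂ) * (1 + Complex.I) / 2) * hq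

end FUaux2

namespace FUaux3
open FUaux FUaux2

lemma half_integrable (C a ω : ℝ) (ha : 0 < a) :
    IntegrableOn (fun t : ℝ => Complex.exp (-(Complex.I * ω * t)) *
      ((C * Real.exp (-a * t) * (Real.cos (a * t) + Real.sin (a * t)) : ℝ) : ℂ))
      (Set.Ioi (0:ℝ)) := by
  have h1 : ((-(a:ℂ) + Complex.I * ((a:ℝ) - ω))).re < 0 := by
    simp [ha]
  have h2 : ((-(a:ℂ) - Complex.I * ((a:ℝ) + ω))).re < 0 := by
    simp [ha]
  have heq : (fun t : ℝ => Complex.exp (-(Complex.I * ω * t)) *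
      ((C * Real.exp (-a * t) * (Real.cos (a * t) + Real.sin (a * t)) : ℝ) : ℂ)) =
      fun t : ℝ => ((C:ℂ)/2) *
        ((1 - Complex.I) * Complex.exp ((-(a:ℂ) + Complex.I * ((a:ℝ) - ω)) * t)
      + (1 + Complex.I) * Complex.exp ((-(a:ℂ) - Complex.I * ((a:ℝ) + ω)) * t)) :=
    funext (ptwise C a ω)
  rw [heq]
  exact (((cexp_integrableOn _ h1).const_mul (1 - Complex.I)).add
    ((cexp_integrableOn _ h2).const_mul (1 + Complex.I))).const_mul ((C:ℂ)/2)

lemma half_integral (C a ω : ℝ) (ha : 0 < a) :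
    ∫ t : ℝ in Set.Ioi (0:ℝ), Complex.exp (-(Complex.I * ω * t)) *
      ((C * Real.exp (-a * t) * (Real.cos (a * t) + Real.sin (a * t)) : ℝ) : ℂ) =
      ((C:ℂ)/2) * ((1 - Complex.I) * (-(-(a:ℂ) + Complex.I * ((a:ℝ) - ω))⁻¹)
        + (1 + Complex.I) * (-(-(a:ℂ) - Complex.I * ((a:ℝ) + ω))⁻¹)) := by
  have h1 : ((-(a:ℂ) + Complex.I * ((a:ℝ) - ω))).re < 0 := by simp [ha]
  have h2 : ((-(a:ℂ) - Complex.I * ((a:ℝ) + ω))).re < 0 := by simp [ha]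
  simp_rw [ptwise C a ω]
  rw [integral_const_mul, integral_add
    ((cexp_integrableOn _ h1).const_mul (1 - Complex.I))
    ((cexp_integrableOn _ h2).const_mul (1 + Complex.I)),
    integral_const_mul, integral_const_mul, integral_cexp_Ioi _ h1, integral_cexp_Ioi _ h2]

end FUaux3

end AuxLemmas

open Set FUaux FUaux2 FUaux3 in
set_option maxHeartbeats 1000000 in
/-- The Fourier transform of `Ψ₂(t) = C e^{-a|t|}(cos(at) + sin(a|t|))`
(with `C, a > 0`) is `Ψ̂₂(ω) = C √(2/π) 4a³/(4a⁴ + ω⁴)`, strictly positive. -/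
theorem fourier_transform_underdamped_relaxation
    (C a : ℝ) (hC : 0 < C) (ha : 0 < a) :
    ∀ ω : ℝ,
      (1 / Real.sqrt (2 * Real.pi)) *
          (∫ t : ℝ, Complex.exp (-(Complex.I * ω * t)) *
            ((C * Real.exp (-a * |t|) *
              (Real.cos (a * t) + Real.sin (a * |t|)) : ℝ) : ℂ)) =
        ((C * Real.sqrt (2 / Real.pi) * (4 * a ^ 3) / (4 * a ^ 4 + ω ^ 4) : ℝ) : ℂ) ∧
      0 < C * Real.sqrt (2 / Real.pi) * (4 * a ^ 3) / (4 * a ^ 4 + ω ^ 4) := by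
  intro ω
  have hD : (0:ℝ) < 4 * a ^ 4 + ω ^ 4 := by positivity
  refine ⟨?_, by positivity⟩
  set F : ℝ → ℂ := fun t => Complex.exp (-(Complex.I * ω * t)) *
    ((C * Real.exp (-a * |t|) * (Real.cos (a * t) + Real.sin (a * |t|)) : ℝ) : ℂ) with hF
  set Kp : ℝ → ℂ := fun t => Complex.exp (-(Complex.I * ω * t)) *
    ((C * Real.exp (-a * t) * (Real.cos (a * t) + Real.sin (a * t)) : ℝ) : ℂ) with hKp
  set Kn : ℝ → ℂ := fun t => Complex.exp (-(Complex.I * ((-ω : ℝ) : ℂ) * t)) *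
    ((C * Real.exp (-a * t) * (Real.cos (a * t) + Real.sin (a * t)) : ℝ) : ℂ) with hKn
  have hEqIoi : Set.EqOn Kp F (Set.Ioi (0:ℝ)) := by
    intro t ht
    simp only [hKp, hF, abs_of_pos (by exact ht : (0:ℝ) < t)]
  have hEqIic : Set.EqOn (fun t => Kn (-t)) F (Set.Iic (0:ℝ)) := by
    intro t ht
    have h2 : Real.cos (a * -t) = Real.cos (a * t) := by
      rw [show a * -t = -(a * t) by ring, Real.cos_neg]
    simp only [hKn, hF, abs_of_nonpos (by exact ht : t ≤ (0:ℝ)), h2]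
    congr 2
    push_cast
    ring
  have hIntIoi : IntegrableOn F (Set.Ioi (0:ℝ)) :=
    (half_integrable C a ω ha).congr_fun hEqIoi measurableSet_Ioi
  have A : MeasurableEmbedding (fun x : ℝ => -x) :=
    (Homeomorph.neg ℝ).isClosedEmbedding.measurableEmbedding
  have hKnIci : IntegrableOn Kn (Set.Ici (0:ℝ)) :=
    Iff.mpr integrableOn_Ici_iff_integrableOn_Ioi (half_integrable C a (-ω) ha)
  have hPre : (fun x : ℝ => -x) ⁻¹' (Set.Ici (0:ℝ)) = Set.Iic 0 := by
    ext x; simp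
  have hIntIic : IntegrableOn F (Set.Iic (0:ℝ)) := by
    have h := hKnIci
    rw [show (volume : Measure ℝ) = Measure.map (fun x => -x) volume from
      (Measure.map_neg_eq_self _).symm] at h
    have h2 := (A.integrableOn_map_iff).mp h
    rw [hPre] at h2
    exact h2.congr_fun hEqIic measurableSet_Iic
  have hsplit : ∫ t : ℝ, F t = (∫ t in Set.Iic (0:ℝ), F t) + ∫ t in Set.Ioi (0:ℝ), F t :=
    (intervalIntegral.integral_Iic_add_Ioi hIntIic hIntIoi).symm
  have hIic : ∫ t in Set.Iic (0:ℝ), F t = ∫ t in Set.Ioi (0:ℝ), Kn t := by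
    rw [← setIntegral_congr_fun measurableSet_Iic hEqIic]
    simpa using integral_comp_neg_Iic (0:ℝ) Kn
  have hIoi : ∫ t in Set.Ioi (0:ℝ), F t = ∫ t in Set.Ioi (0:ℝ), Kp t :=
    (setIntegral_congr_fun measurableSet_Ioi hEqIoi).symm
  rw [hsplit, hIic, hIoi, hKn, hKp, half_integral C a (-ω) ha, half_integral C a ω ha]
  have e1 : -(-(a:ℂ) + Complex.I * ((a:ℂ) - ((-ω : ℝ) : ℂ)))⁻¹
      = ((a:ℂ) + Complex.I * ((-(a + ω) : ℝ) : ℂ))⁻¹ := by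
    rw [show ((a:ℂ) + Complex.I * ((-(a + ω) : ℝ) : ℂ))
        = -(-(a:ℂ) + Complex.I * ((a:ℂ) - ((-ω : ℝ) : ℂ))) by push_cast; ring, inv_neg]
  have e2 : -(-(a:ℂ) - Complex.I * ((a:ℂ) + ((-ω : ℝ) : ℂ)))⁻¹
      = ((a:ℂ) - Complex.I * ((ω - a : ℝ) : ℂ))⁻¹ := by
    rw [show ((a:ℂ) - Complex.I * ((ω - a : ℝ) : ℂ))
        = -(-(a:ℂ) - Complex.I * ((a:ℂ) + ((-ω : ℝ) : ℂ))) by push_cast; ring, inv_neg]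
  have e3 : -(-(a:ℂ) + Complex.I * ((a:ℂ) - ((ω : ℝ) : ℂ)))⁻¹
      = ((a:ℂ) + Complex.I * ((ω - a : ℝ) : ℂ))⁻¹ := by
    rw [show ((a:ℂ) + Complex.I * ((ω - a : ℝ) : ℂ))
        = -(-(a:ℂ) + Complex.I * ((a:ℂ) - ((ω : ℝ) : ℂ))) by push_cast; ring, inv_neg]
  have e4 : -(-(a:ℂ) - Complex.I * ((a:ℂ) + ((ω : ℝ) : ℂ)))⁻¹
      = ((a:ℂ) - Complex.I * ((-(a + ω) : ℝ) : ℂ))⁻¹ := by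
    rw [show ((a:ℂ) - Complex.I * ((-(a + ω) : ℝ) : ℂ))
        = -(-(a:ℂ) - Complex.I * ((a:ℂ) + ((ω : ℝ) : ℂ))) by push_cast; ring, inv_neg]
  rw [e1, e2, e3, e4]
  have k1 := key_pair a (ω - a) ha.ne'
  have k2 := key_pair a (-(a + ω)) ha.ne'
  have hs2 : Real.sqrt (2 * Real.pi) * Real.sqrt (2 / Real.pi) = 2 := by
    rw [← Real.sqrt_mul (by positivity)]
    rw [show (2 * Real.pi) * (2 / Real.pi) = 4 by field_simp; ring]
    rw [show (4:ℝ) = 2 ^ 2 by norm_num, Real.sqrt_sq (by norm_num)]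
  have hspos : (0:ℝ) < Real.sqrt (2 * Real.pi) := Real.sqrt_pos.mpr (by positivity)
  have hq : Real.sqrt (2 / Real.pi) = 2 / Real.sqrt (2 * Real.pi) := by
    rw [eq_div_iff hspos.ne']
    linarith [hs2]
  have hd1 : (0:ℝ) < a ^ 2 + (ω - a) ^ 2 := by positivity
  have hd2 : (0:ℝ) < a ^ 2 + (-(a + ω)) ^ 2 := by positivity
  have hfin : (1 / Real.sqrt (2 * Real.pi)) *
      (C / 2 * (2 * (a - (ω - a)) / (a ^ 2 + (ω - a) ^ 2)
        + 2 * (a - (-(a + ω))) / (a ^ 2 + (-(a + ω)) ^ 2))) =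
      C * Real.sqrt (2 / Real.pi) * (4 * a ^ 3) / (4 * a ^ 4 + ω ^ 4) := by
    rw [hq]
    field_simp
    ring
  have hfinC : (1 / ((Real.sqrt (2 * Real.pi) : ℝ) : ℂ)) *
      (((C : ℝ) : ℂ) / 2 * (((2 * (a - (ω - a)) / (a ^ 2 + (ω - a) ^ 2) : ℝ) : ℂ)
        + ((2 * (a - (-(a + ω))) / (a ^ 2 + (-(a + ω)) ^ 2) : ℝ) : ℂ))) =
      ((C * Real.sqrt (2 / Real.pi) * (4 * a ^ 3) / (4 * a ^ 4 + ω ^ 4) : ℝ) : ℂ) := by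
    rw [← hfin]
    push_cast
    ring
  linear_combination (1 / ((Real.sqrt (2 * Real.pi) : ℝ) : ℂ)) * (((C:ℝ):ℂ)/2) * k1
    + (1 / ((Real.sqrt (2 * Real.pi) : ℝ) : ℂ)) * (((C:ℝ):ℂ)/2) * k2 + hfinC
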